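/- arXiv:2410.17818 — 3 statements merged into one kernel-verified Lean document; each statement's English description precedes it below -/
import Mathlib

section
/- A finitely generated cancelative commutative semigroup S is positive (i.e., m + n = 0 implies m = n = 0) if and only if there exists a semigroup homomorphism λ: S → ℕ such that λ(m) = 0 if and only if m = 0. -/
open Matrix BigOperators

private lemma dot_self_pos {n : ℕ} {b : Fin n → ℚ} (hb : b ≠ 0) : 0 < b ⬝ᵥ b := by
  obtain ⟨j, hj⟩ : ∃ j, b j ≠ 0 := Function.ne_iff.mp hb
  exact Finset.sum_pos' (fun i _ => mul_self_nonneg _) ⟨j, Finset.mem_univ j, mul_self_pos.2 hj⟩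

private lemma farkas : ∀ (k : ℕ) {n : ℕ} (v : Fin k → (Fin n → ℚ)) (b : Fin n → ℚ),
    (∃ c : Fin k → ℚ, (∀ i, 0 ≤ c i) ∧ ∑ i, c i • v i = b) ∨
    (∃ f : Fin n → ℚ, (∀ i, 0 ≤ f ⬝ᵥ v i) ∧ f ⬝ᵥ b < 0) := by
  intro k
  induction k with
  | zero =>
    intro n v b
    by_cases hb : b = 0
    · exact Or.inl ⟨0, fun i => i.elim0, by simp [hb]⟩
    · refine Or.inr ⟨-b, fun i => i.elim0, ?_⟩
      simpa only [neg_dotProduct, neg_lt_zero] using dot_self_pos hb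
  | succ k ih =>
    intro n v b
    rcases ih (fun j => v j.succ) b with ⟨c, hc, hsum⟩ | ⟨f, hf, hfb⟩
    · exact Or.inl ⟨Fin.cons 0 c, Fin.cases (le_refl 0) hc, by
        rw [Fin.sum_univ_succ]; simpa using hsum⟩
    · by_cases h0 : 0 ≤ f ⬝ᵥ v 0
      · exact Or.inr ⟨f, Fin.cases h0 hf, hfb⟩
      push_neg at h0
      have hv0 : f ⬝ᵥ v 0 ≠ 0 := ne_of_lt h0
      set π : (Fin n → ℚ) → (Fin n → ℚ) := fun x => x - (f ⬝ᵥ x / f ⬝ᵥ v 0) • v 0 with hπ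
      rcases ih (fun j => π (v j.succ)) (π b) with ⟨c, hc, hsum⟩ | ⟨g, hg, hgb⟩
      · -- b is in the cone
        set y : Fin n → ℚ := ∑ j, c j • v j.succ with hy
        set s : ℚ := ∑ j, c j * (f ⬝ᵥ v j.succ / f ⬝ᵥ v 0) with hs
        have hL : ∑ j, c j • π (v j.succ) = y - s • v 0 := by
          rw [hy, hs, Finset.sum_smul, ← Finset.sum_sub_distrib]
          congr 1; funext j
          rw [hπ]; simp only [smul_sub, smul_smul]
        have hπy : y - s • v 0 = b - (f ⬝ᵥ b / f ⬝ᵥ v 0) • v 0 := by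
          rw [← hL, hsum, hπ]
        set t : ℚ := f ⬝ᵥ b / f ⬝ᵥ v 0 - s with ht
        have hbt : b = t • v 0 + y := by
          have := hπy
          rw [ht, sub_smul]
          abel_nf
          linear_combination (norm := module) -this
        have htpos : 0 ≤ t := by
          have h1 : 0 < f ⬝ᵥ b / f ⬝ᵥ v 0 := div_pos_of_neg_of_neg hfb h0
          have h2 : s ≤ 0 := by
            refine Finset.sum_nonpos fun j _ => ?_
            exact mul_nonpos_of_nonneg_of_nonpos (hc j)
              (div_nonpos_of_nonneg_of_nonpos (hf j) (le_of_lt h0))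
          rw [ht]; linarith
        refine Or.inl ⟨Fin.cons t c, Fin.cases htpos hc, ?_⟩
        rw [Fin.sum_univ_succ]
        simpa using hbt.symm
      · -- separating functional
        set h : Fin n → ℚ := g - (g ⬝ᵥ v 0 / f ⬝ᵥ v 0) • f with hh
        have key : ∀ x, h ⬝ᵥ x = g ⬝ᵥ π x := by
          intro x
          rw [hh, hπ]
          simp only [sub_dotProduct, smul_dotProduct, dotProduct_sub, dotProduct_smul,
            smul_eq_mul]
          field_simp
        refine Or.inr ⟨h, ?_, ?_⟩
        · intro i
          refine Fin.cases ?_ (fun j => ?_) i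
          · rw [key, hπ]
            simp [div_self hv0]
          · rw [key]; exact hg j
        · rw [key]; exact hgb

private lemma gordan {k n : ℕ} (u : Fin k → (Fin n → ℚ))
    (h : ∀ c : Fin k → ℚ, (∀ i, 0 ≤ c i) → ∑ i, c i • u i = 0 → c = 0) :
    ∃ f : Fin n → ℚ, ∀ i, 0 < f ⬝ᵥ u i := by
  set w : Fin k → (Fin (n+1) → ℚ) := fun i => Fin.cons (-1 : ℚ) (u i) with hw
  set b₀ : Fin (n+1) → ℚ := Fin.cons (-1 : ℚ) 0 with hb₀
  rcases farkas k w b₀ with ⟨c, hc, hsum⟩ | ⟨g, hg, hgb⟩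
  · exfalso
    have h0 : (∑ i, c i • w i) 0 = -1 := by rw [hsum]; simp [hb₀]
    have htail : ∑ i, c i • u i = 0 := by
      funext j
      have := congrFun hsum j.succ
      simpa [Finset.sum_apply, hw, hb₀] using this
    have := h c hc htail
    rw [this] at h0
    simp [Finset.sum_apply] at h0
  · have hs : 0 < g 0 := by
      have : g ⬝ᵥ b₀ = -(g 0) := by
        simp [hb₀, dotProduct, Fin.sum_univ_succ]
      rw [this] at hgb; linarith
    refine ⟨fun j => g j.succ, fun i => ?_⟩
    have := hg i
    have hdot : g ⬝ᵥ w i = -(g 0) + (fun j => g j.succ) ⬝ᵥ u i := by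
      simp [hw, dotProduct, Fin.sum_univ_succ]
    rw [hdot] at this
    linarith


/-- A finitely generated cancelative commutative semigroup (with zero) `M`
is positive iff there is a semigroup homomorphism `λ : M → ℕ` with `λ m = 0 ↔ m = 0`. -/
theorem positive_iff_exists_grading
    (M : Type) [AddCancelCommMonoid M] (hFG : AddMonoid.FG M) :
    (∀ a b : M, a + b = 0 → a = 0 ∧ b = 0) ↔
      ∃ l : M →+ ℕ, ∀ m : M, l m = 0 ↔ m = 0 := by
  constructor
  · intro hpos
    classical
    have hposn : ∀ (j : ℕ) (m : M), j • m = 0 → j ≠ 0 → m = 0 := by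
      intro j m hj hj0
      obtain ⟨j', rfl⟩ := Nat.exists_eq_succ_of_ne_zero hj0
      rw [succ_nsmul] at hj
      exact (hpos _ _ hj).2
    -- generators
    obtain ⟨s, hs⟩ := hFG.fg_top
    set t := s.erase 0 with htdef
    have ht : AddSubmonoid.closure (t : Set M) = ⊤ := by
      apply le_antisymm le_top
      rw [← hs]
      apply AddSubmonoid.closure_le.2
      intro x hx
      by_cases hx0 : x = 0
      · subst hx0; exact zero_mem _
      · exact AddSubmonoid.subset_closure (Finset.mem_erase.2 ⟨hx0, hx⟩)
    set k := t.card with hk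
    set g : Fin k → M := fun i => (t.equivFin.symm i : M) with hgdef
    have hgne : ∀ i, g i ≠ 0 := fun i => (Finset.mem_erase.1 (t.equivFin.symm i).2).1
    set p : (Fin k → ℕ) →+ M :=
      { toFun := fun nn => ∑ i, nn i • g i,
        map_zero' := by simp,
        map_add' := by intro aa bb; simp [add_nsmul, Finset.sum_add_distrib] } with hpdef
    have hsum0 : ∀ nn : Fin k → ℕ, p nn = 0 → ∀ i, nn i • g i = 0 := by
      intro nn h i
      have h2 := Finset.add_sum_erase Finset.univ (fun i => nn i • g i) (Finset.mem_univ i)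
      rw [show ∑ j ∈ Finset.univ, nn j • g j = 0 from h] at h2
      exact (hpos _ _ h2).1
    have hsurj : Function.Surjective p := by
      intro m
      have hle : AddSubmonoid.closure (t : Set M) ≤ AddMonoidHom.mrange p := by
        apply AddSubmonoid.closure_le.2
        intro x hx
        refine ⟨Pi.single (t.equivFin ⟨x, hx⟩) 1, ?_⟩
        simp [hpdef, Pi.single_apply, ite_smul, hgdef]
      exact AddMonoidHom.mem_mrange.1 (hle (ht ▸ AddSubmonoid.mem_top m))
    set cst : (Fin k → ℕ) → (Fin k → ℚ) := fun nn i => (nn i : ℚ) with hcst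
    set W : Submodule ℚ (Fin k → ℚ) :=
      { carrier := {v | ∃ (N : ℕ) (x y : Fin k → ℕ),
          0 < N ∧ (N : ℚ) • v = cst x - cst y ∧ p x = p y},
        zero_mem' := ⟨1, 0, 0, one_pos, by simp [hcst], rfl⟩,
        add_mem' := by
          rintro va vb ⟨N₁,x₁,y₁,hN₁,e₁,q₁⟩ ⟨N₂,x₂,y₂,hN₂,e₂,q₂⟩
          refine ⟨N₁*N₂, N₂•x₁+N₁•x₂, N₂•y₁+N₁•y₂, Nat.mul_pos hN₁ hN₂, ?_, ?_⟩
          · funext i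
            have E₁ := congrFun e₁ i
            have E₂ := congrFun e₂ i
            simp only [hcst, Pi.smul_apply, Pi.add_apply, Pi.sub_apply, smul_eq_mul] at E₁ E₂ ⊢
            push_cast
            linear_combination (N₂:ℚ) * E₁ + (N₁:ℚ) * E₂
          · rw [map_add, map_add, map_nsmul, map_nsmul, map_nsmul, map_nsmul, q₁, q₂],
        smul_mem' := by
          intro q v hv
          obtain ⟨N,x,y,hN,e,hq⟩ := hv
          have hdq : ((q.den:ℚ)) * q = ((q.num:ℤ):ℚ) := by
            rw [mul_comm]; exact_mod_cast Rat.mul_den_eq_num q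
          rcases le_or_gt 0 q.num with hz | hz
          · refine ⟨N * q.den, q.num.toNat • x, q.num.toNat • y,
              Nat.mul_pos hN q.den_pos, ?_, ?_⟩
            · funext i
              have E := congrFun e i
              have hz2 : ((q.num.toNat : ℕ) : ℚ) = ((q.num : ℤ) : ℚ) :=
                mod_cast congrArg (fun z : ℤ => (z:ℚ)) (Int.toNat_of_nonneg hz)
              simp only [hcst, Pi.smul_apply, Pi.sub_apply, smul_eq_mul] at E ⊢
              push_cast
              rw [hz2]
              linear_combination ((q.num:ℤ):ℚ) * E + (N:ℚ) * v i * hdq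
            · rw [map_nsmul, map_nsmul, hq]
          · refine ⟨N * q.den, (-q.num).toNat • y, (-q.num).toNat • x,
              Nat.mul_pos hN q.den_pos, ?_, ?_⟩
            · funext i
              have E := congrFun e i
              have hz2 : (((-q.num).toNat : ℕ) : ℚ) = -((q.num : ℤ) : ℚ) := by
                have h3 : ((-q.num).toNat : ℤ) = -q.num := Int.toNat_of_nonneg (by linarith)
                exact_mod_cast congrArg (fun z : ℤ => (z:ℚ)) h3
              simp only [hcst, Pi.smul_apply, Pi.sub_apply, smul_eq_mul] at E ⊢
              push_cast
              rw [hz2]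
              linear_combination ((q.num:ℤ):ℚ) * E + (N:ℚ) * v i * hdq
            · rw [map_nsmul, map_nsmul, hq] } with hWdef
    haveI hfin : FiniteDimensional ℚ ((Fin k → ℚ) ⧸ W) := inferInstance
    set d := Module.finrank ℚ ((Fin k → ℚ) ⧸ W) with hd
    set B := Module.finBasis ℚ ((Fin k → ℚ) ⧸ W) with hB
    set Q : (Fin k → ℚ) →ₗ[ℚ] (Fin d → ℚ) := B.equivFun.toLinearMap.comp W.mkQ with hQdef
    have hQker : ∀ xx : Fin k → ℚ, Q xx = 0 ↔ xx ∈ W := by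
      intro xx
      rw [hQdef]
      simp only [LinearMap.comp_apply, LinearEquiv.coe_coe, Submodule.mkQ_apply]
      rw [LinearEquiv.map_eq_zero_iff]
      exact Submodule.Quotient.mk_eq_zero W
    set u : Fin k → (Fin d → ℚ) := fun i => Q (Pi.single i 1) with hu
    have hQcst : ∀ c : Fin k → ℚ, Q c = ∑ i, c i • u i := by
      intro c
      have h1 : c = ∑ i, c i • (Pi.single i (1:ℚ) : Fin k → ℚ) := by
        conv_lhs => rw [← Finset.univ_sum_single c]
        refine Finset.sum_congr rfl fun i _ => ?_
        funext j
        simp [Pi.single_apply]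
      conv_lhs => rw [h1]
      rw [map_sum]
      exact Finset.sum_congr rfl fun i _ => by rw [LinearMap.map_smul, hu]
    have hGhyp : ∀ c : Fin k → ℚ, (∀ i, 0 ≤ c i) → ∑ i, c i • u i = 0 → c = 0 := by
      intro c hc hcsum
      obtain ⟨N, x, y, hN, e, hq⟩ := (hQker c).1 (by rw [hQcst]; exact hcsum)
      have hyx : ∀ i, y i ≤ x i := by
        intro i
        have E := congrFun e i
        simp only [hcst, Pi.smul_apply, Pi.sub_apply, smul_eq_mul] at E
        have h0 : (0:ℚ) ≤ (N:ℚ) * c i := mul_nonneg (Nat.cast_nonneg N) (hc i)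
        rw [E] at h0
        exact_mod_cast sub_nonneg.1 h0
      set mm : Fin k → ℕ := fun i => x i - y i with hmm
      have hxm : mm + y = x := funext fun i => Nat.sub_add_cancel (hyx i)
      have hpm : p mm = 0 := by
        have h2 : p mm + p y = 0 + p y := by rw [← map_add, hxm, hq, zero_add]
        exact add_right_cancel h2
      have hm0 : ∀ i, mm i = 0 := by
        intro i
        by_contra hne
        exact hgne i (hposn (mm i) (g i) (hsum0 mm hpm i) hne)
      funext i
      have E := congrFun e i
      simp only [hcst, Pi.smul_apply, Pi.sub_apply, smul_eq_mul, Pi.zero_apply] at E ⊢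
      have hxy : x i = y i := by
        have h4 : x i - y i = 0 := hm0 i
        have h5 := hyx i
        omega
      rw [hxy] at E
      have h6 : (N:ℚ) * c i = 0 := by rw [E]; ring
      have hNne : (N:ℚ) ≠ 0 := Nat.cast_ne_zero.2 hN.ne'
      exact (mul_eq_zero.1 h6).resolve_left hNne
    obtain ⟨f, hf⟩ := gordan u hGhyp
    set N₀ : ℕ := ∏ i, (f ⬝ᵥ u i).den with hN₀
    have hN₀pos : 0 < N₀ := Finset.prod_pos fun i _ => (f ⬝ᵥ u i).den_pos
    have ha : ∀ i, ∃ av : ℕ, 0 < av ∧ (av : ℚ) = (f ⬝ᵥ u i) * N₀ := by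
      intro i
      obtain ⟨cf, hcf⟩ := Finset.dvd_prod_of_mem (fun j => (f ⬝ᵥ u j).den) (Finset.mem_univ i)
      have hval : ((f ⬝ᵥ u i) * N₀ : ℚ) = (((f ⬝ᵥ u i).num * cf : ℤ) : ℚ) := by
        rw [hN₀, hcf]
        push_cast
        rw [← mul_assoc, Rat.mul_den_eq_num]
      have hpos2 : (0:ℚ) < (f ⬝ᵥ u i) * N₀ := by
        have : (0:ℚ) < (N₀:ℚ) := by exact_mod_cast hN₀pos
        exact mul_pos (hf i) this
      have hZ : (0:ℤ) < (f ⬝ᵥ u i).num * cf := by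
        rw [hval] at hpos2
        exact_mod_cast hpos2
      refine ⟨((f ⬝ᵥ u i).num * cf).toNat, by omega, ?_⟩
      rw [hval]
      exact_mod_cast congrArg (fun z : ℤ => (z:ℚ)) (Int.toNat_of_nonneg hZ.le)
    choose a hapos haval using ha
    set ψ : (Fin k → ℕ) → ℕ := fun nn => ∑ i, nn i * a i with hψ
    have hψcast : ∀ nn, ((ψ nn : ℕ) : ℚ) = (f ⬝ᵥ Q (cst nn)) * N₀ := by
      intro nn
      rw [hQcst]
      have h6 : f ⬝ᵥ (∑ i, (cst nn) i • u i) = ∑ i, (nn i : ℚ) * (f ⬝ᵥ u i) := by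
        simp only [dotProduct, Finset.sum_apply, Pi.smul_apply, smul_eq_mul,
          Finset.mul_sum]
        rw [Finset.sum_comm]
        refine Finset.sum_congr rfl fun i _ => Finset.sum_congr rfl fun j _ => ?_
        simp only [hcst]
        ring
      rw [h6, Finset.sum_mul, hψ]
      push_cast
      exact Finset.sum_congr rfl fun i _ => by rw [haval i]; ring
    have hfiber : ∀ nn nn', p nn = p nn' → ψ nn = ψ nn' := by
      intro nn nn' hnn
      have hW : cst nn - cst nn' ∈ W := ⟨1, nn, nn', one_pos, by simp, hnn⟩
      have hQeq : Q (cst nn) = Q (cst nn') := by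
        have h7 := (hQker _).2 hW
        rw [map_sub] at h7
        exact sub_eq_zero.1 h7
      have h8 := hψcast nn
      rw [hQeq, ← hψcast nn'] at h8
      exact_mod_cast h8
    refine ⟨{ toFun := fun m => ψ (hsurj m).choose,
              map_zero' := ?_,
              map_add' := ?_ }, ?_⟩
    · show ψ (hsurj (0:M)).choose = 0
      have h8 : p (hsurj (0:M)).choose = p 0 := by rw [(hsurj 0).choose_spec, map_zero]
      rw [hfiber _ _ h8]
      simp [hψ]
    · intro m₁ m₂
      show ψ (hsurj (m₁+m₂)).choose = ψ (hsurj m₁).choose + ψ (hsurj m₂).choose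
      have h8 : p (hsurj (m₁+m₂)).choose = p ((hsurj m₁).choose + (hsurj m₂).choose) := by
        rw [map_add, (hsurj m₁).choose_spec, (hsurj m₂).choose_spec, (hsurj (m₁+m₂)).choose_spec]
      rw [hfiber _ _ h8]
      simp only [hψ, Pi.add_apply, add_mul, Finset.sum_add_distrib]
    · intro m
      simp only [AddMonoidHom.coe_mk, ZeroHom.coe_mk]
      constructor
      · intro h9
        simp only [hψ] at h9
        have h10 := (Finset.sum_eq_zero_iff).1 h9
        have h11 : (hsurj m).choose = 0 := by
          funext i
          have h12 := h10 i (Finset.mem_univ i)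
          have h13 := hapos i
          exact (Nat.mul_eq_zero.1 h12).resolve_right (by omega)
        rw [← (hsurj m).choose_spec, h11, map_zero]
      · rintro rfl
        have h8 : p (hsurj 0).choose = p 0 := by rw [(hsurj 0).choose_spec, map_zero]
        rw [hfiber _ _ h8]
        simp [hψ]
  · rintro ⟨l, hl⟩ a b hab
    have h : l a + l b = 0 := by rw [← map_add, hab, map_zero]
    constructor <;> rw [← hl] <;> omega
end

section
/- For a simplicial complex T on a finite set E with nonempty support E', one has χ̃(T∨) = (−1)^{#E'−1} χ̃(T), where χ̃(T) = Σ_{J∈T}(−1)^{#J−1}. -/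
open Finset

variable {A : Type} [DecidableEq A]

/-- The support `E' = {e ∈ E | {e} ∈ T}` of a simplicial complex `T` on `E`. -/
def suppT (E : Finset A) (T : Finset (Finset A)) : Finset A :=
  E.filter (fun e => {e} ∈ T)

/-- The Alexander dual `T∨ = {J ⊆ E' | E' \ J ∉ T}`. -/
def alexDual (E : Finset A) (T : Finset (Finset A)) : Finset (Finset A) :=
  (suppT E T).powerset.filter (fun J => suppT E T \ J ∉ T)

/-- The relative Alexander dual `T̄∨ = {L ⊆ E | E \ L ∉ T}`. -/
def relAlexDual (E : Finset A) (T : Finset (Finset A)) : Finset (Finset A) :=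
  E.powerset.filter (fun L => E \ L ∉ T)

/-- Reduced Euler characteristic `χ̃(T) = ∑_{J ∈ T} (-1)^{#J - 1}`. -/
def chiC (T : Finset (Finset A)) : ℤ := ∑ J ∈ T, (-1) ^ (J.card + 1)

/-- For a simplicial complex `T` on `E` with nonempty support `E'`,
`χ̃(T∨) = (-1)^{#E' - 1} χ̃(T)`. -/
theorem chi_alexDual
    (E : Finset A) (T : Finset (Finset A))
    (hTE : ∀ J ∈ T, J ⊆ E) (hT : ∀ J ∈ T, ∀ K ⊆ J, K ∈ T)
    (hsupp : (suppT E T).Nonempty) :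
    chiC (alexDual E T) = (-1) ^ ((suppT E T).card - 1) * chiC T := by
  classical
  set E' := suppT E T with hE'
  have hsub : ∀ J ∈ T, J ⊆ E' := by
    intro J hJ e he
    simp only [hE', suppT, mem_filter]
    exact ⟨hTE J hJ he, hT J hJ {e} (by simpa using he)⟩
  have hn : 1 ≤ E'.card := Finset.card_pos.mpr hsupp
  -- split the powerset sum
  have hsplit := Finset.sum_filter_add_sum_filter_not E'.powerset
      (fun J => E' \ J ∈ T) (fun J => (-1 : ℤ) ^ (J.card + 1))
  have hpow : ∑ J ∈ E'.powerset, (-1 : ℤ) ^ (J.card + 1) = 0 := by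
    have h0 : ∑ J ∈ E'.powerset, (-1 : ℤ) ^ J.card = 0 := by
      rw [Finset.sum_powerset_neg_one_pow_card, if_neg]
      intro h; rw [h] at hsupp; exact Finset.not_nonempty_empty hsupp
    calc ∑ J ∈ E'.powerset, (-1 : ℤ) ^ (J.card + 1)
        = ∑ J ∈ E'.powerset, (-1 : ℤ) ^ J.card * (-1) := by
          refine Finset.sum_congr rfl fun J _ => ?_; rw [pow_succ]
      _ = (∑ J ∈ E'.powerset, (-1 : ℤ) ^ J.card) * (-1) := by rw [← Finset.sum_mul]
      _ = 0 := by rw [h0, zero_mul]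
  have hbij : ∑ J ∈ E'.powerset.filter (fun J => E' \ J ∈ T), (-1 : ℤ) ^ (J.card + 1)
      = ∑ K ∈ T, (-1 : ℤ) ^ (E'.card - K.card + 1) := by
    refine Finset.sum_nbij' (fun J => E' \ J) (fun K => E' \ K) ?_ ?_ ?_ ?_ ?_
    · intro J hJ; exact (Finset.mem_filter.mp hJ).2
    · intro K hK
      refine Finset.mem_filter.mpr ⟨Finset.mem_powerset.mpr (Finset.sdiff_subset), ?_⟩
      rw [Finset.sdiff_sdiff_self_left,
        Finset.inter_eq_right.mpr (hsub K hK)]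
      exact hK
    · intro J hJ
      have := Finset.mem_powerset.mp (Finset.mem_filter.mp hJ).1
      show E' \ (E' \ J) = J
      rw [Finset.sdiff_sdiff_self_left, Finset.inter_eq_right.mpr this]
    · intro K hK
      show E' \ (E' \ K) = K
      rw [Finset.sdiff_sdiff_self_left,
        Finset.inter_eq_right.mpr (hsub K hK)]
    · intro J hJ
      have hJs := Finset.mem_powerset.mp (Finset.mem_filter.mp hJ).1
      have hc : (E' \ J).card = E'.card - J.card := Finset.card_sdiff_of_subset hJs
      have hle : J.card ≤ E'.card := Finset.card_le_card hJs
      have : E'.card - (E' \ J).card = J.card := by rw [hc]; omega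
      rw [this]
  have key : ∀ K ∈ T, -((-1 : ℤ) ^ (E'.card - K.card + 1))
      = (-1 : ℤ) ^ (E'.card - 1) * (-1) ^ (K.card + 1) := by
    intro K hK
    have hk : K.card ≤ E'.card := Finset.card_le_card (hsub K hK)
    set n := E'.card; set k := K.card
    have h2 : (n - 1) + (k + 1) = (n - k) + 2 * k := by omega
    have h3 : ((-1:ℤ)) ^ (n - k + 2 * k) = (-1) ^ (n - k) := by
      rw [pow_add, pow_mul, neg_one_sq, one_pow, mul_one]
    rw [← pow_add, h2, h3, pow_succ]
    ring
  have hTfilter : alexDual E T = E'.powerset.filter (fun J => ¬ (E' \ J ∈ T)) := rfl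
  have : chiC (alexDual E T)
      = ∑ J ∈ E'.powerset, (-1 : ℤ) ^ (J.card + 1)
        - ∑ J ∈ E'.powerset.filter (fun J => E' \ J ∈ T), (-1 : ℤ) ^ (J.card + 1) := by
    rw [chiC, hTfilter]; omega
  rw [this, hpow, zero_sub, hbij, chiC, Finset.mul_sum, ← Finset.sum_neg_distrib]
  exact Finset.sum_congr rfl key
end

section
/- For a simplicial complex T on a finite set E with support E', one has χ̃(T̄∨) = (−1)^{#E − #E'} χ̃(T∨), and consequently −χ̃(T) = (−1)^{#E'}χ̃(T∨) = (−1)^{#E}χ̃(T̄∨) (when E' ≠ ∅). -/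
open Finset

variable {A : Type} [DecidableEq A]

lemma chi_key (S : Finset A) (T : Finset (Finset A)) (hS : S.Nonempty)
    (hTS : ∀ J ∈ T, J ⊆ S) :
    chiC (S.powerset.filter (fun L => S \ L ∉ T)) = -((-1) ^ S.card * chiC T) := by
  classical
  have hsplit :
      chiC (S.powerset.filter (fun L => S \ L ∉ T))
        + ∑ L ∈ S.powerset.filter (fun L => S \ L ∈ T), (-1 : ℤ) ^ (L.card + 1)
        = ∑ L ∈ S.powerset, (-1 : ℤ) ^ (L.card + 1) := by
    rw [chiC]
    rw [← Finset.sum_filter_add_sum_filter_not S.powerset (fun L => S \ L ∉ T)]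
    simp
  have h0 : ∑ L ∈ S.powerset, (-1 : ℤ) ^ (L.card + 1) = 0 := by
    have := Finset.sum_powerset_neg_one_pow_card_of_nonempty hS
    calc ∑ L ∈ S.powerset, (-1 : ℤ) ^ (L.card + 1)
        = ∑ L ∈ S.powerset, (-1 : ℤ) ^ L.card * (-1) := by
          simp [pow_succ]
      _ = 0 := by rw [← Finset.sum_mul, this, zero_mul]
  have hb : ∑ L ∈ S.powerset.filter (fun L => S \ L ∈ T), (-1 : ℤ) ^ (L.card + 1)
      = (-1) ^ S.card * chiC T := by
    rw [chiC, Finset.mul_sum]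
    refine Finset.sum_nbij' (i := fun L => S \ L) (j := fun K => S \ K) ?_ ?_ ?_ ?_ ?_
    · intro L hL
      exact (Finset.mem_filter.1 hL).2
    · intro K hK
      refine Finset.mem_filter.2 ⟨Finset.mem_powerset.2 (Finset.sdiff_subset), ?_⟩
      rwa [Finset.sdiff_sdiff_eq_self (le_iff_subset.2 (hTS K hK))]
    · intro L hL
      exact Finset.sdiff_sdiff_eq_self (le_iff_subset.2 (Finset.mem_powerset.1 (Finset.mem_filter.1 hL).1))
    · intro K hK
      exact Finset.sdiff_sdiff_eq_self (le_iff_subset.2 (hTS K hK))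
    · intro L hL
      have hLS : L ⊆ S := Finset.mem_powerset.1 (Finset.mem_filter.1 hL).1
      have hcard : (S \ L).card + L.card = S.card :=
        Finset.card_sdiff_add_card_eq_card hLS
      rw [← hcard]
      have : ((-1 : ℤ) ^ (S \ L).card) * ((-1 : ℤ) ^ (S \ L).card) = 1 := by
        rw [← pow_add]
        exact Even.neg_one_pow ⟨(S \ L).card, by ring⟩
      calc ((-1 : ℤ)) ^ (L.card + 1)
          = ((-1 : ℤ) ^ (S \ L).card * (-1) ^ (S \ L).card) * (-1) ^ (L.card + 1) := by
            rw [this, one_mul]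
        _ = (-1) ^ ((S \ L).card + L.card) * (-1) ^ ((S \ L).card + 1) := by
            rw [pow_add, pow_add]; ring
  linarith [hsplit, h0, hb]

/-- For a simplicial complex `T` on `E` with nonempty support `E'`,
`χ̃(T̄∨) = (-1)^{#E - #E'} χ̃(T∨)`, and consequently
`-χ̃(T) = (-1)^{#E'} χ̃(T∨) = (-1)^{#E} χ̃(T̄∨)`. -/
theorem chi_relAlexDual
    (E : Finset A) (T : Finset (Finset A))
    (hTE : ∀ J ∈ T, J ⊆ E) (hT : ∀ J ∈ T, ∀ K ⊆ J, K ∈ T)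
    (hsupp : (suppT E T).Nonempty) :
    chiC (relAlexDual E T) = (-1) ^ (E.card - (suppT E T).card) * chiC (alexDual E T) ∧
    - chiC T = (-1) ^ (suppT E T).card * chiC (alexDual E T) ∧
    - chiC T = (-1) ^ E.card * chiC (relAlexDual E T) := by
  classical
  have hsuppE : suppT E T ⊆ E := Finset.filter_subset _ _
  have hE : E.Nonempty := hsupp.mono hsuppE
  have hTE' : ∀ J ∈ T, J ⊆ suppT E T := by
    intro J hJ e he
    refine Finset.mem_filter.2 ⟨hTE J hJ he, ?_⟩
    exact hT J hJ {e} (Finset.singleton_subset_iff.2 he)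
  have hdual : chiC (alexDual E T) = -((-1) ^ (suppT E T).card * chiC T) :=
    chi_key (suppT E T) T hsupp hTE'
  have hrel : chiC (relAlexDual E T) = -((-1) ^ E.card * chiC T) :=
    chi_key E T hE (fun J hJ => hTE J hJ)
  have hle : (suppT E T).card ≤ E.card := Finset.card_le_card hsuppE
  have hpow : ((-1 : ℤ)) ^ (E.card - (suppT E T).card) * (-1) ^ (suppT E T).card
      = (-1) ^ E.card := by
    rw [← pow_add, Nat.sub_add_cancel hle]
  have hsq : ∀ n : ℕ, ((-1 : ℤ)) ^ n * (-1) ^ n = 1 := fun n => by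
    rw [← pow_add]; exact Even.neg_one_pow ⟨n, by ring⟩
  refine ⟨?_, ?_, ?_⟩
  · rw [hdual, hrel]
    calc -((-1 : ℤ) ^ E.card * chiC T)
        = -(((-1) ^ (E.card - (suppT E T).card) * (-1) ^ (suppT E T).card) * chiC T) := by
          rw [hpow]
      _ = (-1) ^ (E.card - (suppT E T).card) * -((-1) ^ (suppT E T).card * chiC T) := by
          ring
  · rw [hdual]
    have := hsq (suppT E T).card
    calc -chiC T = -(((-1 : ℤ) ^ (suppT E T).card * (-1) ^ (suppT E T).card) * chiC T) := by
          rw [this, one_mul]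
      _ = (-1) ^ (suppT E T).card * -((-1) ^ (suppT E T).card * chiC T) := by ring
  · rw [hrel]
    have := hsq E.card
    calc -chiC T = -(((-1 : ℤ) ^ E.card * (-1) ^ E.card) * chiC T) := by
          rw [this, one_mul]
      _ = (-1) ^ E.card * -((-1) ^ E.card * chiC T) := by ring
end
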